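/- Let (b,ψ) be a smooth solution of the vortex equations on ℝ² for parameter ε > 0, and let c = (c₁,c₂) : ℝ² → ℝ² and f : ℝ² → ℂ be smooth and compactly supported. Define the second-variation quadratic form Q(c,f) = ∫_{ℝ²} [ε²(∂₁c₂ − ∂₂c₁)² + |D₁f + ic₁ψ|² + |D₂f + ic₂ψ|² − 2Σ_{j=1,2} c_j·Im(conj(D_jψ)·f) + ε⁻²(Re(ψ̄f))² − (1/(2ε²))(1 − |ψ|²)|f|²]. Then Q(c,f) = ∫_{ℝ²} (ε(∂₁c₂ − ∂₂c₁) + ε⁻¹Re(ψ̄f))² + ∫_{ℝ²} |(D₁f − iD₂f) + i(c₁ − ic₂)ψ|²; in particular Q(c,f) ≥ 0. -/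

import Mathlib

noncomputable section

open Complex MeasureTheory Filter

/-- First partial derivative on `ℝ²`. -/
def pd1 {V : Type*} [NormedAddCommGroup V] [NormedSpace ℝ V] (f : ℝ × ℝ → V) (y : ℝ × ℝ) : V :=
  fderiv ℝ f y (1, 0)

/-- Second partial derivative on `ℝ²`. -/
def pd2 {V : Type*} [NormedAddCommGroup V] [NormedSpace ℝ V] (f : ℝ × ℝ → V) (y : ℝ × ℝ) : V :=
  fderiv ℝ f y (0, 1)

/-- First covariant derivative `D₁u = ∂₁u + i b₁ u`. -/
def D1 (b1 : ℝ × ℝ → ℝ) (ψ : ℝ × ℝ → ℂ) (y : ℝ × ℝ) : ℂ := pd1 ψ y + I * b1 y * ψ y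

/-- Second covariant derivative `D₂u = ∂₂u + i b₂ u`. -/
def D2 (b2 : ℝ × ℝ → ℝ) (ψ : ℝ × ℝ → ℂ) (y : ℝ × ℝ) : ℂ := pd2 ψ y + I * b2 y * ψ y

/-- Curvature `F₁₂ = ∂₁b₂ − ∂₂b₁`. -/
def F12 (b1 b2 : ℝ × ℝ → ℝ) (y : ℝ × ℝ) : ℝ := pd1 b2 y - pd2 b1 y

/-! ### Auxiliary lemmas -/

section Aux

variable {y w : ℝ × ℝ}

@[fun_prop] lemma contDiff_cre' {E : Type*} [NormedAddCommGroup E] [NormedSpace ℝ E]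
    {n : ℕ∞} (u : E → ℂ) (hu : ContDiff ℝ n u) : ContDiff ℝ n fun x => (u x).re :=
  Complex.reCLM.contDiff.comp hu

@[fun_prop] lemma contDiff_cim' {E : Type*} [NormedAddCommGroup E] [NormedSpace ℝ E]
    {n : ℕ∞} (u : E → ℂ) (hu : ContDiff ℝ n u) : ContDiff ℝ n fun x => (u x).im :=
  Complex.imCLM.contDiff.comp hu

@[fun_prop] lemma contDiff_conj' {E : Type*} [NormedAddCommGroup E] [NormedSpace ℝ E]
    {n : ℕ∞} (u : E → ℂ) (hu : ContDiff ℝ n u) : ContDiff ℝ n fun x => (starRingEnd ℂ) (u x) :=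
  Complex.conjCLE.toContinuousLinearMap.contDiff.comp hu

@[fun_prop] lemma contDiff_creal' {E : Type*} [NormedAddCommGroup E] [NormedSpace ℝ E]
    {n : ℕ∞} (u : E → ℝ) (hu : ContDiff ℝ n u) : ContDiff ℝ n fun x => ((u x : ℝ) : ℂ) :=
  Complex.ofRealCLM.contDiff.comp hu

@[fun_prop] lemma continuous_cre' {E : Type*} [TopologicalSpace E]
    (u : E → ℂ) (hu : Continuous u) : Continuous fun x => (u x).re :=
  Complex.continuous_re.comp hu

@[fun_prop] lemma continuous_cim' {E : Type*} [TopologicalSpace E]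
    (u : E → ℂ) (hu : Continuous u) : Continuous fun x => (u x).im :=
  Complex.continuous_im.comp hu

@[fun_prop] lemma continuous_conj' {E : Type*} [TopologicalSpace E]
    (u : E → ℂ) (hu : Continuous u) : Continuous fun x => (starRingEnd ℂ) (u x) :=
  Complex.continuous_conj.comp hu

@[fun_prop] lemma continuous_creal' {E : Type*} [TopologicalSpace E]
    (u : E → ℝ) (hu : Continuous u) : Continuous fun x => ((u x : ℝ) : ℂ) :=
  Complex.continuous_ofReal.comp hu

lemma integral_deriv_zero (h : ℝ → ℝ) (hh : ContDiff ℝ 1 h) (hs : HasCompactSupport h) :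
    ∫ x, deriv h x = 0 := by
  have hint : Integrable (deriv h) :=
    (hh.continuous_deriv le_rfl).integrable_of_hasCompactSupport hs.deriv
  rw [← intervalIntegral.integral_Iic_add_Ioi (b := 0) hint.integrableOn hint.integrableOn,
    hs.integral_Iic_deriv_eq hh 0, hs.integral_Ioi_deriv_eq hh 0]
  ring

lemma slice2_support (g : ℝ × ℝ → ℝ) (hs : HasCompactSupport g) (x : ℝ) :
    HasCompactSupport (fun t => g (x, t)) := by
  apply HasCompactSupport.intro (hs.image continuous_snd)
  intro t ht
  apply image_eq_zero_of_notMem_tsupport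
  exact fun hmem => ht ⟨(x, t), hmem, rfl⟩

lemma slice1_support (g : ℝ × ℝ → ℝ) (hs : HasCompactSupport g) (t : ℝ) :
    HasCompactSupport (fun x => g (x, t)) := by
  apply HasCompactSupport.intro (hs.image continuous_fst)
  intro x hx
  apply image_eq_zero_of_notMem_tsupport
  exact fun hmem => hx ⟨(x, t), hmem, rfl⟩

lemma contDiff_pd1 {V : Type*} [NormedAddCommGroup V] [NormedSpace ℝ V] {f : ℝ × ℝ → V}
    (hf : ContDiff ℝ (⊤ : ℕ∞) f) : ContDiff ℝ (⊤ : ℕ∞) (pd1 f) :=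
  (hf.fderiv_right (by exact_mod_cast le_top)).clm_apply contDiff_const

lemma contDiff_pd2 {V : Type*} [NormedAddCommGroup V] [NormedSpace ℝ V] {f : ℝ × ℝ → V}
    (hf : ContDiff ℝ (⊤ : ℕ∞) f) : ContDiff ℝ (⊤ : ℕ∞) (pd2 f) :=
  (hf.fderiv_right (by exact_mod_cast le_top)).clm_apply contDiff_const

lemma hcs_pd1 {g : ℝ × ℝ → ℝ} (hs : HasCompactSupport g) : HasCompactSupport (pd1 g) :=
  (hs.fderiv (𝕜 := ℝ)).comp_left (g := fun L : (ℝ × ℝ) →L[ℝ] ℝ => L (1, 0)) rfl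

lemma hcs_pd2 {g : ℝ × ℝ → ℝ} (hs : HasCompactSupport g) : HasCompactSupport (pd2 g) :=
  (hs.fderiv (𝕜 := ℝ)).comp_left (g := fun L : (ℝ × ℝ) →L[ℝ] ℝ => L (0, 1)) rfl

lemma integral_pd2_zero (g : ℝ × ℝ → ℝ) (hg : ContDiff ℝ (⊤ : ℕ∞) g)
    (hs : HasCompactSupport g) : ∫ y : ℝ × ℝ, pd2 g y = 0 := by
  have hint : Integrable (pd2 g) :=
    ((contDiff_pd2 hg).continuous).integrable_of_hasCompactSupport (hcs_pd2 hs)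
  rw [Measure.volume_eq_prod] at hint ⊢
  rw [MeasureTheory.integral_prod _ hint]
  have : ∀ x : ℝ, ∫ t : ℝ, pd2 g (x, t) = 0 := by
    intro x
    have hd : ∀ t : ℝ, HasDerivAt (fun t => g (x, t)) (pd2 g (x, t)) t := by
      intro t
      exact (hg.differentiable (by simp) (x, t)).hasFDerivAt.comp_hasDerivAt t
        ((hasDerivAt_const t x).prodMk (hasDerivAt_id t))
    have h1 : ContDiff ℝ 1 (fun t => g (x, t)) :=
      (hg.of_le (by exact_mod_cast le_top)).comp ((contDiff_const.prodMk contDiff_id))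
    have := integral_deriv_zero _ h1 (slice2_support g hs x)
    rw [← this]
    congr 1
    ext t
    exact ((hd t).deriv).symm
  simp [this]

lemma integral_pd1_zero (g : ℝ × ℝ → ℝ) (hg : ContDiff ℝ (⊤ : ℕ∞) g)
    (hs : HasCompactSupport g) : ∫ y : ℝ × ℝ, pd1 g y = 0 := by
  have hint : Integrable (pd1 g) :=
    ((contDiff_pd1 hg).continuous).integrable_of_hasCompactSupport (hcs_pd1 hs)
  rw [Measure.volume_eq_prod] at hint ⊢
  rw [MeasureTheory.integral_prod_symm _ hint]
  have : ∀ t : ℝ, ∫ x : ℝ, pd1 g (x, t) = 0 := by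
    intro t
    have hd : ∀ x : ℝ, HasDerivAt (fun x => g (x, t)) (pd1 g (x, t)) x := by
      intro x
      exact (hg.differentiable (by simp) (x, t)).hasFDerivAt.comp_hasDerivAt x
        ((hasDerivAt_id x).prodMk (hasDerivAt_const x t))
    have h1 : ContDiff ℝ 1 (fun x => g (x, t)) :=
      (hg.of_le (by exact_mod_cast le_top)).comp ((contDiff_id.prodMk contDiff_const))
    have := integral_deriv_zero _ h1 (slice1_support g hs t)
    rw [← this]
    congr 1
    ext x
    exact ((hd x).deriv).symm
  simp [this]

lemma fd_clm {V W : Type*} [NormedAddCommGroup V] [NormedSpace ℝ V] [NormedAddCommGroup W]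
    [NormedSpace ℝ W] (L : V →L[ℝ] W) {u : ℝ × ℝ → V} (hu : DifferentiableAt ℝ u y) :
    fderiv ℝ (fun z => L (u z)) y w = L (fderiv ℝ u y w) := by
  have h : HasFDerivAt (fun z => L (u z)) (L.comp (fderiv ℝ u y)) y :=
    (L.hasFDerivAt (x := u y)).comp y hu.hasFDerivAt
  rw [h.fderiv]; rfl

lemma fd_mul {A : Type*} [NormedCommRing A] [NormedAlgebra ℝ A] {u v : ℝ × ℝ → A}
    (hu : DifferentiableAt ℝ u y) (hv : DifferentiableAt ℝ v y) :
    fderiv ℝ (fun z => u z * v z) y w = fderiv ℝ u y w * v y + u y * fderiv ℝ v y w := by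
  rw [fderiv_fun_mul hu hv]
  simp [smul_eq_mul]
  ring

lemma fd_conj {u : ℝ × ℝ → ℂ} (hu : DifferentiableAt ℝ u y) :
    fderiv ℝ (fun z => (starRingEnd ℂ) (u z)) y w = (starRingEnd ℂ) (fderiv ℝ u y w) :=
  fd_clm Complex.conjCLE.toContinuousLinearMap hu

lemma fd_im {u : ℝ × ℝ → ℂ} (hu : DifferentiableAt ℝ u y) :
    fderiv ℝ (fun z => (u z).im) y w = (fderiv ℝ u y w).im :=
  fd_clm Complex.imCLM hu

lemma fd_re {u : ℝ × ℝ → ℂ} (hu : DifferentiableAt ℝ u y) :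
    fderiv ℝ (fun z => (u z).re) y w = (fderiv ℝ u y w).re :=
  fd_clm Complex.reCLM hu

lemma fd_ofReal {g : ℝ × ℝ → ℝ} (hg : DifferentiableAt ℝ g y) :
    fderiv ℝ (fun z => ((g z : ℝ) : ℂ)) y w = ((fderiv ℝ g y w : ℝ) : ℂ) :=
  fd_clm Complex.ofRealCLM hg

lemma fd_add {V : Type*} [NormedAddCommGroup V] [NormedSpace ℝ V] {u v : ℝ × ℝ → V}
    (hu : DifferentiableAt ℝ u y) (hv : DifferentiableAt ℝ v y) :
    fderiv ℝ (fun z => u z + v z) y w = fderiv ℝ u y w + fderiv ℝ v y w := by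
  rw [fderiv_fun_add hu hv]; rfl

lemma fd_const_mul {A : Type*} [NormedCommRing A] [NormedAlgebra ℝ A] {u : ℝ × ℝ → A} (a : A)
    (hu : DifferentiableAt ℝ u y) :
    fderiv ℝ (fun z => a * u z) y w = a * fderiv ℝ u y w := by
  rw [fd_mul (differentiableAt_const a) hu]
  simp

lemma pd_V (b c : ℝ × ℝ → ℝ) (ψ f : ℝ × ℝ → ℂ)
    (hb : ContDiff ℝ (⊤ : ℕ∞) b) (hc : ContDiff ℝ (⊤ : ℕ∞) c)
    (hψ : ContDiff ℝ (⊤ : ℕ∞) ψ) (hf : ContDiff ℝ (⊤ : ℕ∞) f) (v : ℝ × ℝ) :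
    fderiv ℝ (fun z => ((starRingEnd ℂ) (f z) * (fderiv ℝ f z v + I * (b z : ℂ) * f z)).im
      + 2 * (c z * ((starRingEnd ℂ) (ψ z) * f z).re)) y w
    = ((starRingEnd ℂ) (fderiv ℝ f y w) * (fderiv ℝ f y v)
        + (starRingEnd ℂ) (f y) * (fderiv ℝ (fun z => fderiv ℝ f z v) y w)).im
      + ((starRingEnd ℂ) (fderiv ℝ f y w) * (I * (b y : ℂ) * f y)
        + (starRingEnd ℂ) (f y) * (I * ((fderiv ℝ b y w : ℝ) : ℂ) * f y)
        + (starRingEnd ℂ) (f y) * (I * (b y : ℂ) * (fderiv ℝ f y w))).im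
      + (2 * (fderiv ℝ c y w) * ((starRingEnd ℂ) (ψ y) * f y).re
        + 2 * (c y * ((starRingEnd ℂ) (fderiv ℝ ψ y w) * f y
            + (starRingEnd ℂ) (ψ y) * (fderiv ℝ f y w)).re)) := by
  have hdf : DifferentiableAt ℝ f y := hf.differentiable (by simp) y
  have hdψ : DifferentiableAt ℝ ψ y := hψ.differentiable (by simp) y
  have hdb : DifferentiableAt ℝ b y := hb.differentiable (by simp) y
  have hdc : DifferentiableAt ℝ c y := hc.differentiable (by simp) y
  have hsm : ContDiff ℝ (⊤ : ℕ∞) (fun z => fderiv ℝ f z v) :=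
    (hf.fderiv_right (by exact_mod_cast le_top)).clm_apply contDiff_const
  have hdpdf : DifferentiableAt ℝ (fun z => fderiv ℝ f z v) y :=
    hsm.differentiable (by simp) y
  have hdconjf : DifferentiableAt ℝ (fun z => (starRingEnd ℂ) (f z)) y := by
    exact (Complex.conjCLE.toContinuousLinearMap.differentiableAt).comp y hdf
  have hdconjψ : DifferentiableAt ℝ (fun z => (starRingEnd ℂ) (ψ z)) y := by
    exact (Complex.conjCLE.toContinuousLinearMap.differentiableAt).comp y hdψ
  have hdob : DifferentiableAt ℝ (fun z => ((b z : ℝ) : ℂ)) y :=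
    (Complex.ofRealCLM.differentiableAt).comp y hdb
  have hdIb : DifferentiableAt ℝ (fun z => I * ((b z : ℝ) : ℂ)) y :=
    (differentiableAt_const I).mul hdob
  have hdIbf : DifferentiableAt ℝ (fun z => I * ((b z : ℝ) : ℂ) * f z) y := hdIb.mul hdf
  have hdD : DifferentiableAt ℝ (fun z => fderiv ℝ f z v + I * ((b z : ℝ) : ℂ) * f z) y :=
    hdpdf.add hdIbf
  have hdT1 : DifferentiableAt ℝ
      (fun z => ((starRingEnd ℂ) (f z) * (fderiv ℝ f z v + I * (b z : ℂ) * f z)).im) y := by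
    exact (Complex.imCLM.differentiableAt).comp y (hdconjf.mul hdD)
  have hdcψf : DifferentiableAt ℝ (fun z => (starRingEnd ℂ) (ψ z) * f z) y := hdconjψ.mul hdf
  have hdre : DifferentiableAt ℝ (fun z => ((starRingEnd ℂ) (ψ z) * f z).re) y := by
    exact (Complex.reCLM.differentiableAt).comp y hdcψf
  have hdT2 : DifferentiableAt ℝ (fun z => 2 * (c z * ((starRingEnd ℂ) (ψ z) * f z).re)) y :=
    (differentiableAt_const 2).mul (hdc.mul hdre)
  rw [fd_add hdT1 hdT2, fd_im (hdconjf.fun_mul hdD), fd_mul hdconjf hdD, fd_conj hdf,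
    fd_add hdpdf hdIbf, fd_mul hdIb hdf, fd_const_mul I hdob,
    fd_ofReal hdb, fd_const_mul (2 : ℝ) (hdc.fun_mul hdre), fd_mul hdc hdre, fd_re hdcψf,
    fd_mul hdconjψ hdf, fd_conj hdψ]
  simp only [Complex.add_im, Complex.add_re, mul_add, add_mul]
  ring

lemma pd_symm {f : ℝ × ℝ → ℂ} (hf : ContDiff ℝ (⊤ : ℕ∞) f) (y v w : ℝ × ℝ) :
    fderiv ℝ (fun z => fderiv ℝ f z v) y w = fderiv ℝ (fun z => fderiv ℝ f z w) y v := by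
  have hc : ContDiff ℝ (⊤ : ℕ∞) (fderiv ℝ f) := hf.fderiv_right (by exact_mod_cast le_top)
  have hdff : DifferentiableAt ℝ (fderiv ℝ f) y :=
    hc.differentiable (by simp) y
  have h1 : fderiv ℝ (fun z => fderiv ℝ f z v) y w = (fderiv ℝ (fderiv ℝ f) y w) v := by
    have := fd_clm (w := w) (ContinuousLinearMap.apply ℝ ℂ v) hdff
    simpa using this
  have h2 : fderiv ℝ (fun z => fderiv ℝ f z w) y v = (fderiv ℝ (fderiv ℝ f) y v) w := by
    have := fd_clm (w := v) (ContinuousLinearMap.apply ℝ ℂ w) hdff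
    simpa using this
  rw [h1, h2]
  exact (hf.contDiffAt.isSymmSndFDerivAt (by rw [minSmoothness_of_isRCLikeNormedField]; exact WithTop.coe_le_coe.mpr (le_top : (2 : ℕ∞) ≤ ⊤))).eq w v

lemma pd_zero_of_nmem {V : Type*} [NormedAddCommGroup V] [NormedSpace ℝ V]
    {g : ℝ × ℝ → V} {y : ℝ × ℝ} (hy : y ∉ tsupport g) (v : ℝ × ℝ) : fderiv ℝ g y v = 0 := by
  have : fderiv ℝ g y = 0 := by
    by_contra h
    exact hy (support_fderiv_subset ℝ (Function.mem_support.mpr h))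
  rw [this]; rfl

lemma key_identity (ε : ℝ) (hε : ε ≠ 0) (B1 B2 C1 C2 p1c2 p2c1 p1b2 p2b1 : ℝ)
    (F P F1 F2 P1 P2 S : ℂ)
    (hv1 : ε * (p1b2 - p2b1) = (1 - ‖P‖ ^ 2) / (2 * ε))
    (hv2 : (P1 + I * B1 * P) - I * (P2 + I * B2 * P) = 0) :
    ε ^ 2 * (p1c2 - p2c1) ^ 2 + ‖F1 + I * B1 * F + I * C1 * P‖ ^ 2
      + ‖F2 + I * B2 * F + I * C2 * P‖ ^ 2
      - 2 * (C1 * ((starRingEnd ℂ) (P1 + I * B1 * P) * F).im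
          + C2 * ((starRingEnd ℂ) (P2 + I * B2 * P) * F).im)
      + ε⁻¹ ^ 2 * (((starRingEnd ℂ) P * F).re) ^ 2
      - 1 / (2 * ε ^ 2) * (1 - ‖P‖ ^ 2) * ‖F‖ ^ 2
    = (ε * (p1c2 - p2c1) + ε⁻¹ * (((starRingEnd ℂ) P * F).re)) ^ 2
      + ‖((F1 + I * B1 * F) - I * (F2 + I * B2 * F)) + I * ((C1 : ℂ) - I * C2) * P‖ ^ 2
      - (((starRingEnd ℂ) F1 * F2 + (starRingEnd ℂ) F * S).im
          + ((starRingEnd ℂ) F1 * (I * B2 * F) + (starRingEnd ℂ) F * (I * p1b2 * F)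
            + (starRingEnd ℂ) F * (I * B2 * F1)).im
          + 2 * p1c2 * (((starRingEnd ℂ) P * F).re)
          + 2 * C2 * (((starRingEnd ℂ) P1 * F + (starRingEnd ℂ) P * F1).re))
      + (((starRingEnd ℂ) F2 * F1 + (starRingEnd ℂ) F * S).im
          + ((starRingEnd ℂ) F2 * (I * B1 * F) + (starRingEnd ℂ) F * (I * p2b1 * F)
            + (starRingEnd ℂ) F * (I * B1 * F2)).im
          + 2 * p2c1 * (((starRingEnd ℂ) P * F).re)
          + 2 * C1 * (((starRingEnd ℂ) P2 * F + (starRingEnd ℂ) P * F2).re)) := by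
  have hP1 : P1 = I * P2 - B2 * P - I * B1 * P := by
    linear_combination hv2 + (B2:ℂ) * P * Complex.I_sq
  subst hP1
  have hb : p1b2 = p2b1 + (1 - ‖P‖ ^ 2) / (2 * ε ^ 2) := by
    field_simp at hv1 ⊢
    linarith
  subst hb
  simp only [Complex.sq_norm, I_sq, normSq_apply, map_sub, map_add, map_mul, conj_I,
    conj_ofReal, mul_re, mul_im, add_re, add_im, sub_re, sub_im, I_re, I_im, ofReal_re, ofReal_im,
    conj_re, conj_im, neg_re, neg_im, neg_mul, one_mul, zero_mul, mul_zero, mul_one, zero_sub,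
    sub_zero, zero_add, add_zero, neg_neg, neg_zero]
  field_simp
  ring

end Aux

/-- the second variation of the Ginzburg-Landau energy at a vortex solution is a
sum of two squares; in particular it is nonnegative. -/
theorem second_variation_sum_of_squares (ε : ℝ) (hε : 0 < ε)
    (b1 b2 : ℝ × ℝ → ℝ) (ψ : ℝ × ℝ → ℂ)
    (hb1 : ContDiff ℝ (⊤ : ℕ∞) b1) (hb2 : ContDiff ℝ (⊤ : ℕ∞) b2)
    (hψ : ContDiff ℝ (⊤ : ℕ∞) ψ)
    (hv1 : ∀ y, ε * F12 b1 b2 y = (1 - ‖ψ y‖ ^ 2) / (2 * ε))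
    (hv2 : ∀ y, D1 b1 ψ y - I * D2 b2 ψ y = 0)
    (c1 c2 : ℝ × ℝ → ℝ) (f : ℝ × ℝ → ℂ)
    (hc1 : ContDiff ℝ (⊤ : ℕ∞) c1) (hc2 : ContDiff ℝ (⊤ : ℕ∞) c2)
    (hf : ContDiff ℝ (⊤ : ℕ∞) f)
    (hc1s : HasCompactSupport c1) (hc2s : HasCompactSupport c2)
    (hfs : HasCompactSupport f) :
    (∫ y : ℝ × ℝ,
        (ε ^ 2 * (pd1 c2 y - pd2 c1 y) ^ 2
          + ‖D1 b1 f y + I * (c1 y : ℂ) * ψ y‖ ^ 2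
          + ‖D2 b2 f y + I * (c2 y : ℂ) * ψ y‖ ^ 2
          - 2 * (c1 y * ((starRingEnd ℂ) (D1 b1 ψ y) * f y).im
            + c2 y * ((starRingEnd ℂ) (D2 b2 ψ y) * f y).im)
          + ε⁻¹ ^ 2 * (((starRingEnd ℂ) (ψ y) * f y).re) ^ 2
          - 1 / (2 * ε ^ 2) * (1 - ‖ψ y‖ ^ 2) * ‖f y‖ ^ 2))
      = (∫ y : ℝ × ℝ,
          (ε * (pd1 c2 y - pd2 c1 y) + ε⁻¹ * ((starRingEnd ℂ) (ψ y) * f y).re) ^ 2)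
        + (∫ y : ℝ × ℝ,
          ‖(D1 b1 f y - I * D2 b2 f y) + I * ((c1 y : ℝ) - I * ((c2 y : ℝ) : ℂ)) * ψ y‖ ^ 2) ∧
    0 ≤ (∫ y : ℝ × ℝ,
        (ε ^ 2 * (pd1 c2 y - pd2 c1 y) ^ 2
          + ‖D1 b1 f y + I * (c1 y : ℂ) * ψ y‖ ^ 2
          + ‖D2 b2 f y + I * (c2 y : ℂ) * ψ y‖ ^ 2
          - 2 * (c1 y * ((starRingEnd ℂ) (D1 b1 ψ y) * f y).im
            + c2 y * ((starRingEnd ℂ) (D2 b2 ψ y) * f y).im)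
          + ε⁻¹ ^ 2 * (((starRingEnd ℂ) (ψ y) * f y).re) ^ 2
          - 1 / (2 * ε ^ 2) * (1 - ‖ψ y‖ ^ 2) * ‖f y‖ ^ 2)) := by
  have hεne : ε ≠ 0 := ne_of_gt hε
  -- the two "vector potential" functions whose curl accounts for the difference
  set V1 : ℝ × ℝ → ℝ := fun z =>
    ((starRingEnd ℂ) (f z) * (fderiv ℝ f z (1, 0) + I * (b1 z : ℂ) * f z)).im
      + 2 * (c1 z * ((starRingEnd ℂ) (ψ z) * f z).re) with hV1def
  set V2 : ℝ × ℝ → ℝ := fun z =>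
    ((starRingEnd ℂ) (f z) * (fderiv ℝ f z (0, 1) + I * (b2 z : ℂ) * f z)).im
      + 2 * (c2 z * ((starRingEnd ℂ) (ψ z) * f z).re) with hV2def
  have hsm1 : ContDiff ℝ (⊤ : ℕ∞) (fun z => fderiv ℝ f z (1, 0)) :=
    (hf.fderiv_right (by exact_mod_cast le_top)).clm_apply contDiff_const
  have hsm2 : ContDiff ℝ (⊤ : ℕ∞) (fun z => fderiv ℝ f z (0, 1)) :=
    (hf.fderiv_right (by exact_mod_cast le_top)).clm_apply contDiff_const
  have hV1sm : ContDiff ℝ (⊤ : ℕ∞) V1 := by rw [hV1def]; fun_prop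
  have hV2sm : ContDiff ℝ (⊤ : ℕ∞) V2 := by rw [hV2def]; fun_prop
  have hV1cs : HasCompactSupport V1 := by
    apply HasCompactSupport.intro hfs
    intro x hx
    have hfx : f x = 0 := image_eq_zero_of_notMem_tsupport hx
    simp [hV1def, hfx]
  have hV2cs : HasCompactSupport V2 := by
    apply HasCompactSupport.intro hfs
    intro x hx
    have hfx : f x = 0 := image_eq_zero_of_notMem_tsupport hx
    simp [hV2def, hfx]
  -- pointwise identity
  have hpt : ∀ y : ℝ × ℝ,
      (ε ^ 2 * (pd1 c2 y - pd2 c1 y) ^ 2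
          + ‖D1 b1 f y + I * (c1 y : ℂ) * ψ y‖ ^ 2
          + ‖D2 b2 f y + I * (c2 y : ℂ) * ψ y‖ ^ 2
          - 2 * (c1 y * ((starRingEnd ℂ) (D1 b1 ψ y) * f y).im
            + c2 y * ((starRingEnd ℂ) (D2 b2 ψ y) * f y).im)
          + ε⁻¹ ^ 2 * (((starRingEnd ℂ) (ψ y) * f y).re) ^ 2
          - 1 / (2 * ε ^ 2) * (1 - ‖ψ y‖ ^ 2) * ‖f y‖ ^ 2)
      = (ε * (pd1 c2 y - pd2 c1 y) + ε⁻¹ * ((starRingEnd ℂ) (ψ y) * f y).re) ^ 2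
        + ‖(D1 b1 f y - I * D2 b2 f y) + I * ((c1 y : ℝ) - I * ((c2 y : ℝ) : ℂ)) * ψ y‖ ^ 2
        - fderiv ℝ V2 y (1, 0) + fderiv ℝ V1 y (0, 1) := by
    intro y
    have e2 : fderiv ℝ V2 y (1, 0)
        = ((starRingEnd ℂ) (fderiv ℝ f y (1, 0)) * (fderiv ℝ f y (0, 1))
            + (starRingEnd ℂ) (f y) * (fderiv ℝ (fun z => fderiv ℝ f z (0, 1)) y (1, 0))).im
          + ((starRingEnd ℂ) (fderiv ℝ f y (1, 0)) * (I * (b2 y : ℂ) * f y)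
            + (starRingEnd ℂ) (f y) * (I * ((fderiv ℝ b2 y (1, 0) : ℝ) : ℂ) * f y)
            + (starRingEnd ℂ) (f y) * (I * (b2 y : ℂ) * (fderiv ℝ f y (1, 0)))).im
          + (2 * (fderiv ℝ c2 y (1, 0)) * ((starRingEnd ℂ) (ψ y) * f y).re
            + 2 * (c2 y * ((starRingEnd ℂ) (fderiv ℝ ψ y (1, 0)) * f y
                + (starRingEnd ℂ) (ψ y) * (fderiv ℝ f y (1, 0))).re)) := by
      rw [hV2def]
      exact pd_V b2 c2 ψ f hb2 hc2 hψ hf (0, 1)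
    have e1 : fderiv ℝ V1 y (0, 1)
        = ((starRingEnd ℂ) (fderiv ℝ f y (0, 1)) * (fderiv ℝ f y (1, 0))
            + (starRingEnd ℂ) (f y) * (fderiv ℝ (fun z => fderiv ℝ f z (0, 1)) y (1, 0))).im
          + ((starRingEnd ℂ) (fderiv ℝ f y (0, 1)) * (I * (b1 y : ℂ) * f y)
            + (starRingEnd ℂ) (f y) * (I * ((fderiv ℝ b1 y (0, 1) : ℝ) : ℂ) * f y)
            + (starRingEnd ℂ) (f y) * (I * (b1 y : ℂ) * (fderiv ℝ f y (0, 1)))).im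
          + (2 * (fderiv ℝ c1 y (0, 1)) * ((starRingEnd ℂ) (ψ y) * f y).re
            + 2 * (c1 y * ((starRingEnd ℂ) (fderiv ℝ ψ y (0, 1)) * f y
                + (starRingEnd ℂ) (ψ y) * (fderiv ℝ f y (0, 1))).re)) := by
      rw [hV1def]
      rw [pd_V b1 c1 ψ f hb1 hc1 hψ hf (1, 0), pd_symm hf y (1, 0) (0, 1)]
    rw [e1, e2]
    have h1 := hv1 y
    simp only [F12, pd1, pd2] at h1
    have h2 := hv2 y
    simp only [D1, D2, pd1, pd2] at h2
    simp only [D1, D2, pd1, pd2]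
    linear_combination key_identity ε hεne (b1 y) (b2 y) (c1 y) (c2 y)
      (fderiv ℝ c2 y (1, 0)) (fderiv ℝ c1 y (0, 1)) (fderiv ℝ b2 y (1, 0)) (fderiv ℝ b1 y (0, 1))
      (f y) (ψ y) (fderiv ℝ f y (1, 0)) (fderiv ℝ f y (0, 1))
      (fderiv ℝ ψ y (1, 0)) (fderiv ℝ ψ y (0, 1))
      (fderiv ℝ (fun z => fderiv ℝ f z (0, 1)) y (1, 0)) h1 h2
  -- integrability of the two squares
  have hψc : Continuous ψ := hψ.continuous
  have hfc : Continuous f := hf.continuous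
  have hb1c : Continuous b1 := hb1.continuous
  have hb2c : Continuous b2 := hb2.continuous
  have hc1c : Continuous c1 := hc1.continuous
  have hc2c : Continuous c2 := hc2.continuous
  have hK : IsCompact (tsupport c1 ∪ tsupport c2 ∪ tsupport f) :=
    (hc1s.union hc2s).union hfs
  have hR1cont : Continuous (fun y : ℝ × ℝ =>
      (ε * (pd1 c2 y - pd2 c1 y) + ε⁻¹ * ((starRingEnd ℂ) (ψ y) * f y).re) ^ 2) := by
    have h1 : Continuous (pd1 c2) := (contDiff_pd1 hc2).continuous
    have h2 : Continuous (pd2 c1) := (contDiff_pd2 hc1).continuous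
    fun_prop
  have hR2cont : Continuous (fun y : ℝ × ℝ =>
      ‖(D1 b1 f y - I * D2 b2 f y) + I * ((c1 y : ℝ) - I * ((c2 y : ℝ) : ℂ)) * ψ y‖ ^ 2) := by
    have h1 : Continuous (pd1 f) := (contDiff_pd1 hf).continuous
    have h2 : Continuous (pd2 f) := (contDiff_pd2 hf).continuous
    simp only [D1, D2]
    fun_prop
  have hR1cs : HasCompactSupport (fun y : ℝ × ℝ =>
      (ε * (pd1 c2 y - pd2 c1 y) + ε⁻¹ * ((starRingEnd ℂ) (ψ y) * f y).re) ^ 2) := by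
    apply HasCompactSupport.intro hK
    intro x hx
    simp only [Set.mem_union] at hx
    push_neg at hx
    have hfx : f x = 0 := image_eq_zero_of_notMem_tsupport hx.2
    have hc2x : pd1 c2 x = 0 := pd_zero_of_nmem hx.1.2 (1, 0)
    have hc1x : pd2 c1 x = 0 := pd_zero_of_nmem hx.1.1 (0, 1)
    simp [hfx, hc2x, hc1x]
  have hR2cs : HasCompactSupport (fun y : ℝ × ℝ =>
      ‖(D1 b1 f y - I * D2 b2 f y) + I * ((c1 y : ℝ) - I * ((c2 y : ℝ) : ℂ)) * ψ y‖ ^ 2) := by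
    apply HasCompactSupport.intro hK
    intro x hx
    simp only [Set.mem_union] at hx
    push_neg at hx
    have hfx : f x = 0 := image_eq_zero_of_notMem_tsupport hx.2
    have hdf1 : pd1 f x = 0 := pd_zero_of_nmem hx.2 (1, 0)
    have hdf2 : pd2 f x = 0 := pd_zero_of_nmem hx.2 (0, 1)
    have hc1x : c1 x = 0 := image_eq_zero_of_notMem_tsupport hx.1.1
    have hc2x : c2 x = 0 := image_eq_zero_of_notMem_tsupport hx.1.2
    simp [D1, D2, hfx, hdf1, hdf2, hc1x, hc2x]
  have hR1int : Integrable (fun y : ℝ × ℝ =>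
      (ε * (pd1 c2 y - pd2 c1 y) + ε⁻¹ * ((starRingEnd ℂ) (ψ y) * f y).re) ^ 2) :=
    hR1cont.integrable_of_hasCompactSupport hR1cs
  have hR2int : Integrable (fun y : ℝ × ℝ =>
      ‖(D1 b1 f y - I * D2 b2 f y) + I * ((c1 y : ℝ) - I * ((c2 y : ℝ) : ℂ)) * ψ y‖ ^ 2) :=
    hR2cont.integrable_of_hasCompactSupport hR2cs
  have hp1int : Integrable (fun y : ℝ × ℝ => fderiv ℝ V2 y (1, 0)) :=
    ((contDiff_pd1 hV2sm).continuous).integrable_of_hasCompactSupport (hcs_pd1 hV2cs)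
  have hp2int : Integrable (fun y : ℝ × ℝ => fderiv ℝ V1 y (0, 1)) :=
    ((contDiff_pd2 hV1sm).continuous).integrable_of_hasCompactSupport (hcs_pd2 hV1cs)
  have hz1 : (∫ y : ℝ × ℝ, fderiv ℝ V2 y (1, 0)) = 0 := integral_pd1_zero V2 hV2sm hV2cs
  have hz2 : (∫ y : ℝ × ℝ, fderiv ℝ V1 y (0, 1)) = 0 := integral_pd2_zero V1 hV1sm hV1cs
  have main : (∫ y : ℝ × ℝ,
        (ε ^ 2 * (pd1 c2 y - pd2 c1 y) ^ 2
          + ‖D1 b1 f y + I * (c1 y : ℂ) * ψ y‖ ^ 2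
          + ‖D2 b2 f y + I * (c2 y : ℂ) * ψ y‖ ^ 2
          - 2 * (c1 y * ((starRingEnd ℂ) (D1 b1 ψ y) * f y).im
            + c2 y * ((starRingEnd ℂ) (D2 b2 ψ y) * f y).im)
          + ε⁻¹ ^ 2 * (((starRingEnd ℂ) (ψ y) * f y).re) ^ 2
          - 1 / (2 * ε ^ 2) * (1 - ‖ψ y‖ ^ 2) * ‖f y‖ ^ 2))
      = (∫ y : ℝ × ℝ,
          (ε * (pd1 c2 y - pd2 c1 y) + ε⁻¹ * ((starRingEnd ℂ) (ψ y) * f y).re) ^ 2)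
        + (∫ y : ℝ × ℝ,
          ‖(D1 b1 f y - I * D2 b2 f y) + I * ((c1 y : ℝ) - I * ((c2 y : ℝ) : ℂ)) * ψ y‖ ^ 2) := by
    have hfeq : (fun y : ℝ × ℝ =>
        (ε ^ 2 * (pd1 c2 y - pd2 c1 y) ^ 2
          + ‖D1 b1 f y + I * (c1 y : ℂ) * ψ y‖ ^ 2
          + ‖D2 b2 f y + I * (c2 y : ℂ) * ψ y‖ ^ 2
          - 2 * (c1 y * ((starRingEnd ℂ) (D1 b1 ψ y) * f y).im
            + c2 y * ((starRingEnd ℂ) (D2 b2 ψ y) * f y).im)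
          + ε⁻¹ ^ 2 * (((starRingEnd ℂ) (ψ y) * f y).re) ^ 2
          - 1 / (2 * ε ^ 2) * (1 - ‖ψ y‖ ^ 2) * ‖f y‖ ^ 2))
        = (fun y : ℝ × ℝ =>
          ((ε * (pd1 c2 y - pd2 c1 y) + ε⁻¹ * ((starRingEnd ℂ) (ψ y) * f y).re) ^ 2
            + ‖(D1 b1 f y - I * D2 b2 f y) + I * ((c1 y : ℝ) - I * ((c2 y : ℝ) : ℂ)) * ψ y‖ ^ 2
            - fderiv ℝ V2 y (1, 0)) + fderiv ℝ V1 y (0, 1)) := by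
      funext y
      linarith [hpt y]
    have e1 : (∫ y : ℝ × ℝ,
          (((ε * (pd1 c2 y - pd2 c1 y) + ε⁻¹ * ((starRingEnd ℂ) (ψ y) * f y).re) ^ 2
            + ‖(D1 b1 f y - I * D2 b2 f y) + I * ((c1 y : ℝ) - I * ((c2 y : ℝ) : ℂ)) * ψ y‖ ^ 2
            - fderiv ℝ V2 y (1, 0)) + fderiv ℝ V1 y (0, 1)))
        = (∫ y : ℝ × ℝ,
            ((ε * (pd1 c2 y - pd2 c1 y) + ε⁻¹ * ((starRingEnd ℂ) (ψ y) * f y).re) ^ 2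
              + ‖(D1 b1 f y - I * D2 b2 f y) + I * ((c1 y : ℝ) - I * ((c2 y : ℝ) : ℂ)) * ψ y‖ ^ 2
              - fderiv ℝ V2 y (1, 0)))
          + ∫ y : ℝ × ℝ, fderiv ℝ V1 y (0, 1) :=
      integral_add ((hR1int.add hR2int).sub hp1int) hp2int
    have e2 : (∫ y : ℝ × ℝ,
            ((ε * (pd1 c2 y - pd2 c1 y) + ε⁻¹ * ((starRingEnd ℂ) (ψ y) * f y).re) ^ 2
              + ‖(D1 b1 f y - I * D2 b2 f y) + I * ((c1 y : ℝ) - I * ((c2 y : ℝ) : ℂ)) * ψ y‖ ^ 2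
              - fderiv ℝ V2 y (1, 0)))
        = (∫ y : ℝ × ℝ,
            ((ε * (pd1 c2 y - pd2 c1 y) + ε⁻¹ * ((starRingEnd ℂ) (ψ y) * f y).re) ^ 2
              + ‖(D1 b1 f y - I * D2 b2 f y) + I * ((c1 y : ℝ) - I * ((c2 y : ℝ) : ℂ)) * ψ y‖ ^ 2))
          - ∫ y : ℝ × ℝ, fderiv ℝ V2 y (1, 0) :=
      integral_sub (hR1int.add hR2int) hp1int
    have e3 : (∫ y : ℝ × ℝ,
            ((ε * (pd1 c2 y - pd2 c1 y) + ε⁻¹ * ((starRingEnd ℂ) (ψ y) * f y).re) ^ 2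
              + ‖(D1 b1 f y - I * D2 b2 f y) + I * ((c1 y : ℝ) - I * ((c2 y : ℝ) : ℂ)) * ψ y‖ ^ 2))
        = (∫ y : ℝ × ℝ,
            (ε * (pd1 c2 y - pd2 c1 y) + ε⁻¹ * ((starRingEnd ℂ) (ψ y) * f y).re) ^ 2)
          + ∫ y : ℝ × ℝ,
            ‖(D1 b1 f y - I * D2 b2 f y) + I * ((c1 y : ℝ) - I * ((c2 y : ℝ) : ℂ)) * ψ y‖ ^ 2 :=
      integral_add hR1int hR2int
    rw [hfeq, e1, e2, e3, hz1, hz2]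
    ring
  refine ⟨main, ?_⟩
  rw [main]
  have h1 : 0 ≤ ∫ y : ℝ × ℝ,
      (ε * (pd1 c2 y - pd2 c1 y) + ε⁻¹ * ((starRingEnd ℂ) (ψ y) * f y).re) ^ 2 :=
    integral_nonneg fun y => sq_nonneg _
  have h2 : 0 ≤ ∫ y : ℝ × ℝ,
      ‖(D1 b1 f y - I * D2 b2 f y) + I * ((c1 y : ℝ) - I * ((c2 y : ℝ) : ℂ)) * ψ y‖ ^ 2 :=
    integral_nonneg fun y => pow_nonneg (norm_nonneg _) 2
  linarith
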